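/- Let G be a finite simple graph and let v₀v₁⋯v_k be a path in G such that for each i with 0 < i < k, there is no path from v_{i−1} to v_{i+1} in the graph G − v_i (i.e., v_{i−1} and v_{i+1} lie in different connected components of G − v_i). Then every vertex u of G has at most 2 neighbours in the set {v₀, v₁, …, v_k}. -/

import Mathlib

open SimpleGraph

lemma walk_of_chain {V : Type*} (G : SimpleGraph V) :
    ∀ (l : List V) (hl : l ≠ []) (_ : l.Chain' G.Adj),
      ∃ p : G.Walk (l.head hl) (l.getLast hl), ∀ y ∈ p.support, y ∈ l := by
  intro l
  induction l with
  | nil => simp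
  | cons x t ih =>
    intro _ hc
    cases t with
    | nil => exact ⟨Walk.nil, by simp⟩
    | cons y s =>
      obtain ⟨hxy, hc'⟩ := List.isChain_cons_cons.mp hc
      obtain ⟨p, hp⟩ := ih (by simp) hc'
      refine ⟨(Walk.cons hxy p).copy rfl (by simp [List.getLast_cons]), ?_⟩
      intro z hz
      change z ∈ x :: p.support at hz
      replace hz := List.mem_cons.mp hz
      rcases hz with h | h
      · simp [h]
      · exact List.mem_cons_of_mem _ (hp z h)

lemma walk_segment {V : Type*} (G : SimpleGraph V) (l : List V) (hc : l.Chain' G.Adj)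
    {i j : ℕ} (hij : i ≤ j) (hj : j < l.length) :
    ∃ p : G.Walk l[i] l[j], ∀ y ∈ p.support, ∃ m, i ≤ m ∧ m ≤ j ∧ ∃ hm : m < l.length, y = l[m] := by
  set s := (l.drop i).take (j - i + 1) with hs
  have hslen : s.length = j - i + 1 := by simp [hs]; omega
  have hsne : s ≠ [] := by intro h; rw [h] at hslen; simp at hslen
  have hget : ∀ (m : ℕ) (hm : m < s.length), s[m] = l[i + m] := by
    intro m hm
    simp [hs, List.getElem_take, List.getElem_drop]
  have hhead : s.head hsne = l[i] := by
    rw [List.head_eq_getElem]; simpa using hget 0 (by omega)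
  have hlast : s.getLast hsne = l[j] := by
    rw [List.getLast_eq_getElem]
    rw [hget _ (by omega)]
    congr 1; omega
  have hcs : s.Chain' G.Adj := (hc.drop i).take _
  obtain ⟨p, hp⟩ := walk_of_chain G s hsne hcs
  refine ⟨(p.copy hhead hlast), ?_⟩
  intro y hy
  rw [Walk.support_copy] at hy
  obtain ⟨m, hm, hym⟩ := List.getElem_of_mem (hp y hy)
  refine ⟨i + m, by omega, by omega, by omega, ?_⟩
  rw [← hym, hget m hm]

lemma key_lemma {V : Type*} (G : SimpleGraph V) (l : List V)
    (hchain : l.Chain' G.Adj) (hnodup : l.Nodup)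
    (hsep : ∀ i : ℕ, 0 < i → ∀ hi : i + 1 < l.length,
      ∀ q : G.Walk (l.get ⟨i - 1, lt_of_le_of_lt (Nat.sub_le i 1) (Nat.lt_of_succ_lt hi)⟩) (l.get ⟨i + 1, hi⟩),
        l.get ⟨i, Nat.lt_of_succ_lt hi⟩ ∈ q.support)
    (u : V) {a b c : ℕ} (hab : a < b) (hbc : b < c) (hc : c < l.length)
    (ha' : ∀ h : a < l.length, G.Adj u l[a]) (hb' : ∀ h : b < l.length, G.Adj u l[b])
    (hc' : G.Adj u l[c]) : False := by
  have hal : a < l.length := by omega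
  have hbl : b < l.length := by omega
  have ha := ha' hal
  have hb := hb' hbl
  obtain ⟨p1, hp1⟩ := walk_segment G l hchain (show a ≤ b - 1 by omega) (show b - 1 < l.length by omega)
  obtain ⟨p2, hp2⟩ := walk_segment G l hchain (show b + 1 ≤ c by omega) hc
  have e1 : G.Adj l[a] u := ha.symm
  have hmem := hsep b (by omega) (by omega)
    (p1.reverse.append (Walk.cons e1 (Walk.cons hc' p2.reverse)))
  simp only [List.get_eq_getElem] at hmem
  simp only [Walk.support_append, Walk.support_cons, Walk.support_reverse,
    List.mem_append, List.mem_reverse, List.tail_cons, List.mem_cons] at hmem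
  rcases hmem with h | h | h
  · obtain ⟨m, h1, h2, hm, he⟩ := hp1 _ h
    rw [hnodup.getElem_inj_iff] at he
    omega
  · exact G.irrefl (h ▸ hb)
  · obtain ⟨m, h1, h2, hm, he⟩ := hp2 _ h
    rw [hnodup.getElem_inj_iff] at he
    omega

theorem stmt5 {V : Type*} [Fintype V] (G : SimpleGraph V) (l : List V) (hne : l ≠ [])
    (hchain : l.Chain' G.Adj) (hnodup : l.Nodup)
    (hsep : ∀ i : ℕ, 0 < i → ∀ hi : i + 1 < l.length,
      ∀ q : G.Walk (l.get ⟨i - 1, by omega⟩) (l.get ⟨i + 1, hi⟩),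
        l.get ⟨i, by omega⟩ ∈ q.support) :
    ∀ u : V, {w | w ∈ l ∧ G.Adj u w}.ncard ≤ 2 := by
  classical
  intro u
  by_contra hcard
  push_neg at hcard
  rw [Set.ncard_eq_toFinset_card'] at hcard
  rw [Finset.two_lt_card_iff] at hcard
  obtain ⟨w1, w2, w3, hw1, hw2, hw3, h12, h13, h23⟩ := hcard
  simp only [Set.mem_toFinset, Set.mem_setOf_eq] at hw1 hw2 hw3
  obtain ⟨i1, hi1, he1⟩ := List.getElem_of_mem hw1.1
  obtain ⟨i2, hi2, he2⟩ := List.getElem_of_mem hw2.1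
  obtain ⟨i3, hi3, he3⟩ := List.getElem_of_mem hw3.1
  have d12 : i1 ≠ i2 := by rintro rfl; exact h12 (he1.symm.trans he2)
  have d13 : i1 ≠ i3 := by rintro rfl; exact h13 (he1.symm.trans he3)
  have d23 : i2 ≠ i3 := by rintro rfl; exact h23 (he2.symm.trans he3)
  have a1 : ∀ h : i1 < l.length, G.Adj u l[i1] := fun _ => he1 ▸ hw1.2
  have a2 : ∀ h : i2 < l.length, G.Adj u l[i2] := fun _ => he2 ▸ hw2.2
  have a3 : ∀ h : i3 < l.length, G.Adj u l[i3] := fun _ => he3 ▸ hw3.2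
  rcases lt_trichotomy i1 i2 with h1 | h1 | h1 <;>
  rcases lt_trichotomy i2 i3 with h2 | h2 | h2 <;>
  rcases lt_trichotomy i1 i3 with h3 | h3 | h3 <;>
  first
  | omega
  | exact key_lemma G l hchain hnodup hsep u h1 h2 hi3 a1 a2 (a3 hi3)
  | exact key_lemma G l hchain hnodup hsep u h3 (by omega) hi2 a1 a3 (a2 hi2)
  | exact key_lemma G l hchain hnodup hsep u (by omega) (by omega) hi3 a2 a1 (a3 hi3)
  | exact key_lemma G l hchain hnodup hsep u h2 (by omega) hi1 a2 a3 (a1 hi1)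
  | exact key_lemma G l hchain hnodup hsep u (by omega) (by omega) hi2 a3 a1 (a2 hi2)
  | exact key_lemma G l hchain hnodup hsep u (by omega) (by omega) hi1 a3 a2 (a1 hi1)
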